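/- Let f*_{A,i*} ∈ ℝ^d (i* ∈ {1,…,n_A*}) and f*_{B,j*} ∈ ℝ^d (j* ∈ {1,…,n_B*}) be fixed feature vectors, and let p_A, p_B be probability vectors on {1,…,n_A*} and {1,…,n_B*} with strictly positive entries. Let (ι_k)_{k≥1} and (κ_l)_{l≥1} be independent i.i.d. sequences with laws p_A and p_B, and for sample sizes n_A, n_B set f_{A,k} = f*_{A,ι_k} (k ≤ n_A) and f_{B,l} = f*_{B,κ_l} (l ≤ n_B). Let DS denote the dual-softmax assignment of the sampled features, DS_{k,l} = z_{k,l}² / ((Σ_{a=1}^{n_A} z_{a,l})·(Σ_{b=1}^{n_B} z_{k,b})) with z_{k,l} = exp(f_{A,k}ᵀ f_{B,l}), and let DS^{p_A,p_B} denote the reweighted dual-softmax assignment of the fixed features, DS^{p_A,p_B}_{i*,j*} = p_A(i*) p_B(j*) (z*_{i*,j*})² / ((Σ_{a=1}^{n_A*} p_A(a) z*_{a,j*})·(Σ_{b=1}^{n_B*} p_B(b) z*_{i*,b})) with z*_{i*,j*} = exp((f*_{A,i*})ᵀ f*_{B,j*}). Then for every i* ∈ {1,…,n_A*} and j* ∈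 {1,…,n_B*}, as n_A, n_B → ∞ jointly, Σ_{k ≤ n_A : ι_k = i*} Σ_{l ≤ n_B : κ_l = j*} DS_{k,l} → DS^{p_A,p_B}_{i*,j*} in probability. -/

import Mathlib

open MeasureTheory Filter Finset ProbabilityTheory

noncomputable section

/-- `X` converges to `Y` in probability (w.r.t. the measure `P`) along the filter `l`. -/
def TendstoInProb {Ω : Type*} [MeasurableSpace Ω] (P : Measure Ω)
    {ι : Type*} (l : Filter ι) {E : Type*} [Dist E]
    (X : ι → Ω → E) (Y : Ω → E) : Prop :=
  ∀ ε : ℝ, 0 < ε → Tendsto (fun n => P {ω | ε < dist (X n ω) (Y ω)}) l (nhds 0)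

def empFreq {Ω : Type*} {n : ℕ} (X : ℕ → Ω → Fin n) (m : ℕ) (ω : Ω) : Fin n → ℝ :=
  fun i => (∑ k ∈ Finset.range m, if X k ω = i then (1:ℝ) else 0) / m

lemma empFreq_measurable {Ω : Type*} [MeasurableSpace Ω] {n : ℕ} (X : ℕ → Ω → Fin n)
    (hX : ∀ k, Measurable (X k)) (m : ℕ) : Measurable (empFreq X m) := by
  rw [measurable_pi_iff]
  intro i
  apply Measurable.div_const
  apply Finset.measurable_sum
  intro k _
  exact Measurable.ite (hX k (measurableSet_singleton i)) measurable_const measurable_const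

lemma empFreq_ae_tendsto {Ω : Type*} [MeasurableSpace Ω] (P : Measure Ω) [IsProbabilityMeasure P]
    {n : ℕ} (X : ℕ → Ω → Fin n) (hX : ∀ k, Measurable (X k)) (p : Fin n → ℝ)
    (hp : ∀ i, 0 ≤ p i) (hlaw : ∀ k i, P {ω | X k ω = i} = ENNReal.ofReal (p i))
    (hindep : iIndepFun X P) (i : Fin n) :
    ∀ᵐ ω ∂P, Tendsto (fun m => empFreq X m ω i) atTop (nhds (p i)) := by
  set Y : ℕ → Ω → ℝ := fun k ω => if X k ω = i then (1:ℝ) else 0 with hY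
  have hs : ∀ k, MeasurableSet {ω | X k ω = i} := fun k => hX k (measurableSet_singleton i)
  have hYind : ∀ k, Y k = Set.indicator {ω | X k ω = i} (fun _ => (1:ℝ)) := by
    intro k; funext ω
    simp [hY, Set.indicator_apply, Set.mem_setOf_eq]
  have hint : Integrable (Y 0) P := by
    rw [hYind 0]
    exact (integrable_const (1:ℝ)).indicator (hs 0)
  have hcomp : iIndepFun Y P := by
    have := hindep.comp (fun _ => fun x : Fin n => if x = i then (1:ℝ) else 0)
      (fun _ => measurable_of_countable _)
    exact this
  have hident : ∀ k, IdentDistrib (Y k) (Y 0) P P := by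
    intro k
    have hmap : Measure.map (X k) P = Measure.map (X 0) P := by
      apply MeasureTheory.Measure.ext_of_singleton
      intro j
      rw [Measure.map_apply (hX k) (measurableSet_singleton j),
        Measure.map_apply (hX 0) (measurableSet_singleton j)]
      have h1 : X k ⁻¹' {j} = {ω | X k ω = j} := rfl
      have h2 : X 0 ⁻¹' {j} = {ω | X 0 ω = j} := rfl
      rw [h1, h2, hlaw k j, hlaw 0 j]
    have hid : IdentDistrib (X k) (X 0) P P :=
      ⟨(hX k).aemeasurable, (hX 0).aemeasurable, hmap⟩
    exact hid.comp (measurable_of_countable (fun x : Fin n => if x = i then (1:ℝ) else 0))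
  have hmean : P[Y 0] = p i := by
    rw [hYind 0, integral_indicator_const (1:ℝ) (hs 0), measureReal_def, hlaw 0 i, smul_eq_mul, mul_one,
      ENNReal.toReal_ofReal (hp i)]
  have := strong_law_ae_real Y hint (fun k l hkl => hcomp.indepFun hkl) hident
  rw [hmean] at this
  exact this

lemma empFreq_tendstoInMeasure {Ω : Type*} [MeasurableSpace Ω] (P : Measure Ω)
    [IsProbabilityMeasure P]
    {n : ℕ} (X : ℕ → Ω → Fin n) (hX : ∀ k, Measurable (X k)) (p : Fin n → ℝ)
    (hp : ∀ i, 0 ≤ p i) (hlaw : ∀ k i, P {ω | X k ω = i} = ENNReal.ofReal (p i))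
    (hindep : iIndepFun X P) :
    TendstoInMeasure P (fun m => empFreq X m) atTop (fun _ => p) := by
  apply tendstoInMeasure_of_tendsto_ae
    (fun m => ((empFreq_measurable X hX m).aestronglyMeasurable))
  have := MeasureTheory.ae_all_iff.mpr (fun i => empFreq_ae_tendsto P X hX p hp hlaw hindep i)
  filter_upwards [this] with ω hω
  rw [tendsto_pi_nhds]
  exact hω

lemma fiber_sum {Ω : Type*} {n : ℕ} (X : ℕ → Ω → Fin n) (ω : Ω) (m : ℕ) (F : Fin n → ℝ) :
    ∑ k ∈ Finset.range m, F (X k ω) =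
      ∑ i, (∑ k ∈ Finset.range m, if X k ω = i then (1:ℝ) else 0) * F i := by
  have h1 : ∀ i, (∑ k ∈ Finset.range m, if X k ω = i then (1:ℝ) else 0) * F i
      = ∑ k ∈ Finset.range m, if X k ω = i then F i else 0 := by
    intro i
    rw [Finset.sum_mul]
    exact Finset.sum_congr rfl fun k _ => by by_cases h : X k ω = i <;> simp [h]
  simp_rw [h1]
  rw [Finset.sum_comm]
  exact Finset.sum_congr rfl fun k _ => by simp


lemma sum_div_mul {n : ℕ} (N z : Fin n → ℝ) (a : ℝ) :
    ∑ i, (N i / a) * z i = (∑ i, N i * z i) / a := by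
  rw [Finset.sum_div]
  exact Finset.sum_congr rfl fun i _ => div_mul_eq_mul_div _ _ _

lemma alg3 {nA' nB' : ℕ} (NA : Fin nA' → ℝ) (NB : Fin nB' → ℝ)
    (zA : Fin nA' → ℝ) (zB : Fin nB' → ℝ) (istar : Fin nA') (jstar : Fin nB')
    (E a b : ℝ) (hDA : (∑ i, NA i * zA i) ≠ 0) (hDB : (∑ j, NB j * zB j) ≠ 0)
    (ha : a ≠ 0) (hb : b ≠ 0) :
    NA istar * (NB jstar * (E ^ 2 / ((∑ i, NA i * zA i) * (∑ j, NB j * zB j)))) =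
      (NA istar / a) * (NB jstar / b) * E ^ 2 /
        ((∑ i, (NA i / a) * zA i) * (∑ j, (NB j / b) * zB j)) := by
  rw [sum_div_mul, sum_div_mul]
  field_simp

/-- asymptotic equivalence of dual-softmax matching on i.i.d. sampled features
and reweighted dual-softmax on the fixed features.  Samples `k ∈ {1,…,n_A}` are modelled as
`k ∈ Finset.range n_A` (0-based), with `f_{A,k} = fAstar (ι k)` and `f_{B,l} = fBstar (κ l)`. -/
theorem reweighted_dual_softmax_asymptotic
    {Ω : Type*} [MeasurableSpace Ω] (P : Measure Ω) [IsProbabilityMeasure P]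
    (d nAs nBs : ℕ) (hd : 0 < d) (hnAs : 0 < nAs) (hnBs : 0 < nBs)
    (fAstar : Fin nAs → Fin d → ℝ) (fBstar : Fin nBs → Fin d → ℝ)
    (pA : Fin nAs → ℝ) (pB : Fin nBs → ℝ)
    (hpA_pos : ∀ i, 0 < pA i) (hpA_sum : ∑ i, pA i = 1)
    (hpB_pos : ∀ j, 0 < pB j) (hpB_sum : ∑ j, pB j = 1)
    (ι : ℕ → Ω → Fin nAs) (κ : ℕ → Ω → Fin nBs)
    (hι_meas : ∀ k, Measurable (ι k)) (hκ_meas : ∀ l, Measurable (κ l))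
    -- each `ι k` has law `pA`, each `κ l` has law `pB`
    (hι_law : ∀ k i, P {ω | ι k ω = i} = ENNReal.ofReal (pA i))
    (hκ_law : ∀ l j, P {ω | κ l ω = j} = ENNReal.ofReal (pB j))
    -- each sequence is independent, and the two sequences are independent of each other
    (hι_indep : iIndepFun ι P)
    (hκ_indep : iIndepFun κ P)
    (h_cross : IndepFun (fun ω k => ι k ω) (fun ω l => κ l ω) P) :
    ∀ (istar : Fin nAs) (jstar : Fin nBs),
      TendstoInProb P (atTop : Filter (ℕ × ℕ))
        (fun nAB ω =>
          ∑ k ∈ Finset.range nAB.1, ∑ l ∈ Finset.range nAB.2,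
            if ι k ω = istar ∧ κ l ω = jstar then
              (Real.exp (∑ a, fAstar (ι k ω) a * fBstar (κ l ω) a)) ^ 2 /
                ((∑ k' ∈ Finset.range nAB.1,
                    Real.exp (∑ a, fAstar (ι k' ω) a * fBstar (κ l ω) a)) *
                  (∑ l' ∈ Finset.range nAB.2,
                    Real.exp (∑ a, fAstar (ι k ω) a * fBstar (κ l' ω) a)))
            else 0)
        (fun _ =>
          pA istar * pB jstar * (Real.exp (∑ a, fAstar istar a * fBstar jstar a)) ^ 2 /
            ((∑ i, pA i * Real.exp (∑ a, fAstar i a * fBstar jstar a)) *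
              (∑ j, pB j * Real.exp (∑ a, fAstar istar a * fBstar j a)))) := by
  intro istar jstar
  haveI : Nonempty (Fin nAs) := Fin.pos_iff_nonempty.mp hnAs
  haveI : Nonempty (Fin nBs) := Fin.pos_iff_nonempty.mp hnBs
  set G : (Fin nAs → ℝ) × (Fin nBs → ℝ) → ℝ := fun v =>
    v.1 istar * v.2 jstar * (Real.exp (∑ a, fAstar istar a * fBstar jstar a)) ^ 2 /
      ((∑ i, v.1 i * Real.exp (∑ a, fAstar i a * fBstar jstar a)) *
        (∑ j, v.2 j * Real.exp (∑ a, fAstar istar a * fBstar j a))) with hG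
  have hden1 : (∑ i, pA i * Real.exp (∑ a, fAstar i a * fBstar jstar a)) ≠ 0 :=
    ne_of_gt (Finset.sum_pos (fun i _ => mul_pos (hpA_pos i) (Real.exp_pos _))
      Finset.univ_nonempty)
  have hden2 : (∑ j, pB j * Real.exp (∑ a, fAstar istar a * fBstar j a)) ≠ 0 :=
    ne_of_gt (Finset.sum_pos (fun j _ => mul_pos (hpB_pos j) (Real.exp_pos _))
      Finset.univ_nonempty)
  have hGcont : ContinuousAt G (pA, pB) := by
    apply ContinuousAt.div
    · exact Continuous.continuousAt (by fun_prop)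
    · exact Continuous.continuousAt (by fun_prop)
    · exact mul_ne_zero hden1 hden2
  have hTA := empFreq_tendstoInMeasure P ι hι_meas pA (fun i => (hpA_pos i).le) hι_law hι_indep
  have hTB := empFreq_tendstoInMeasure P κ hκ_meas pB (fun j => (hpB_pos j).le) hκ_law hκ_indep
  -- pointwise algebraic identity
  have key : ∀ (ω : Ω) (nA nB : ℕ), 0 < nA → 0 < nB →
      (∑ k ∈ Finset.range nA, ∑ l ∈ Finset.range nB,
        if ι k ω = istar ∧ κ l ω = jstar then
          (Real.exp (∑ a, fAstar (ι k ω) a * fBstar (κ l ω) a)) ^ 2 /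
            ((∑ k' ∈ Finset.range nA,
                Real.exp (∑ a, fAstar (ι k' ω) a * fBstar (κ l ω) a)) *
              (∑ l' ∈ Finset.range nB,
                Real.exp (∑ a, fAstar (ι k ω) a * fBstar (κ l' ω) a)))
        else 0)
        = G (empFreq ι nA ω, empFreq κ nB ω) := by
    intro ω nA nB hnA hnB
    have hDA : (0:ℝ) < ∑ k' ∈ Finset.range nA,
        Real.exp (∑ a, fAstar (ι k' ω) a * fBstar jstar a) :=
      Finset.sum_pos (fun _ _ => Real.exp_pos _) (Finset.nonempty_range_iff.mpr hnA.ne')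
    have hDB : (0:ℝ) < ∑ l' ∈ Finset.range nB,
        Real.exp (∑ a, fAstar istar a * fBstar (κ l' ω) a) :=
      Finset.sum_pos (fun _ _ => Real.exp_pos _) (Finset.nonempty_range_iff.mpr hnB.ne')
    have step1 : (∑ k ∈ Finset.range nA, ∑ l ∈ Finset.range nB,
        if ι k ω = istar ∧ κ l ω = jstar then
          (Real.exp (∑ a, fAstar (ι k ω) a * fBstar (κ l ω) a)) ^ 2 /
            ((∑ k' ∈ Finset.range nA,
                Real.exp (∑ a, fAstar (ι k' ω) a * fBstar (κ l ω) a)) *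
              (∑ l' ∈ Finset.range nB,
                Real.exp (∑ a, fAstar (ι k ω) a * fBstar (κ l' ω) a)))
        else 0)
        = (∑ k ∈ Finset.range nA, if ι k ω = istar then (1:ℝ) else 0) *
          ((∑ l ∈ Finset.range nB, if κ l ω = jstar then (1:ℝ) else 0) *
            ((Real.exp (∑ a, fAstar istar a * fBstar jstar a)) ^ 2 /
              ((∑ k' ∈ Finset.range nA,
                  Real.exp (∑ a, fAstar (ι k' ω) a * fBstar jstar a)) *
                (∑ l' ∈ Finset.range nB,
                  Real.exp (∑ a, fAstar istar a * fBstar (κ l' ω) a))))) := by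
      simp_rw [Finset.sum_mul, Finset.mul_sum]
      refine Finset.sum_congr rfl fun k _ => Finset.sum_congr rfl fun l _ => ?_
      by_cases h1 : ι k ω = istar <;> by_cases h2 : κ l ω = jstar <;>
        simp [h1, h2]
    have step2 := fiber_sum ι ω nA
      (fun i => Real.exp (∑ a, fAstar i a * fBstar jstar a))
    have step3 := fiber_sum κ ω nB
      (fun j => Real.exp (∑ a, fAstar istar a * fBstar j a))
    have hnA' : ((nA:ℝ)) ≠ 0 := Nat.cast_ne_zero.mpr hnA.ne'
    have hnB' : ((nB:ℝ)) ≠ 0 := Nat.cast_ne_zero.mpr hnB.ne'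
    rw [step2] at hDA
    rw [step3] at hDB
    rw [step1, step2, step3, hG]
    simp only [empFreq]
    exact alg3 _ _ _ _ istar jstar _ _ _ hDA.ne' hDB.ne' hnA' hnB' 
  -- final assembly
  intro ε hε
  rw [Metric.continuousAt_iff] at hGcont
  obtain ⟨δ, hδ, hδG⟩ := hGcont ε hε
  have hbound : ∀ᶠ nAB : ℕ × ℕ in atTop,
      P {ω | ε < dist
          (∑ k ∈ Finset.range nAB.1, ∑ l ∈ Finset.range nAB.2,
            if ι k ω = istar ∧ κ l ω = jstar then
              (Real.exp (∑ a, fAstar (ι k ω) a * fBstar (κ l ω) a)) ^ 2 /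
                ((∑ k' ∈ Finset.range nAB.1,
                    Real.exp (∑ a, fAstar (ι k' ω) a * fBstar (κ l ω) a)) *
                  (∑ l' ∈ Finset.range nAB.2,
                    Real.exp (∑ a, fAstar (ι k ω) a * fBstar (κ l' ω) a)))
            else 0)
          (G (pA, pB))}
        ≤ P {x | δ ≤ dist (empFreq ι nAB.1 x) pA} + P {x | δ ≤ dist (empFreq κ nAB.2 x) pB} := by
    rw [eventually_atTop]
    refine ⟨(1, 1), fun nAB hge => ?_⟩
    have h1 : 0 < nAB.1 := hge.1
    have h2 : 0 < nAB.2 := hge.2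
    refine le_trans (measure_mono ?_) (measure_union_le _ _)
    intro ω hω
    by_contra hc
    simp only [Set.mem_union, Set.mem_setOf_eq, not_or, not_le] at hc
    have hpair : dist ((empFreq ι nAB.1 ω, empFreq κ nAB.2 ω) : (Fin nAs → ℝ) × (Fin nBs → ℝ))
        (pA, pB) < δ := by
      rw [Prod.dist_eq]
      exact max_lt hc.1 hc.2
    have := hδG hpair
    rw [← key ω nAB.1 nAB.2 h1 h2] at this
    exact absurd (hω : ε < _) (not_lt.mpr this.le)
  have h0 : Tendsto (fun nAB : ℕ × ℕ =>
      P {x | δ ≤ dist (empFreq ι nAB.1 x) pA} + P {x | δ ≤ dist (empFreq κ nAB.2 x) pB})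
      atTop (nhds 0) := by
    rw [← prod_atTop_atTop_eq]
    have h1 : Tendsto (fun nAB : ℕ × ℕ => P {x | δ ≤ dist (empFreq ι nAB.1 x) pA})
        (atTop ×ˢ atTop) (nhds 0) := (tendstoInMeasure_iff_dist.mp hTA δ hδ).comp tendsto_fst
    have h2 : Tendsto (fun nAB : ℕ × ℕ => P {x | δ ≤ dist (empFreq κ nAB.2 x) pB})
        (atTop ×ˢ atTop) (nhds 0) := (tendstoInMeasure_iff_dist.mp hTB δ hδ).comp tendsto_snd
    simpa using h1.add h2
  have hlimG : G (pA, pB)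
      = pA istar * pB jstar * (Real.exp (∑ a, fAstar istar a * fBstar jstar a)) ^ 2 /
        ((∑ i, pA i * Real.exp (∑ a, fAstar i a * fBstar jstar a)) *
          (∑ j, pB j * Real.exp (∑ a, fAstar istar a * fBstar j a))) := rfl
  rw [← hlimG]
  exact tendsto_of_tendsto_of_tendsto_of_le_of_le' tendsto_const_nhds h0
    (Eventually.of_forall fun _ => zero_le) hbound


end
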